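/- Let n, s be positive integers, let G be a finite group and N a normal subgroup of G with |G:N| = n such that N contains exactly s non-central G-conjugacy classes. Then |N| < n^(2^s) · (s+1) · ∏_{i=0}^{s-1} (s+1-i)^(2^(s-1-i)). -/

import Mathlib

private def Fb (n : ℕ) : ℕ → ℕ → ℕ
  | 0, b => b
  | 1, b => b
  | (k+2), b => max ((k+2)*b) (Fb n (k+1) (n*(k+2)*b^2))

private lemma Fb_mono (n : ℕ) : ∀ (k : ℕ) {b b' : ℕ}, b ≤ b' → Fb n k b ≤ Fb n k b'
  | 0, _, _, h => h
  | 1, _, _, h => h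
  | (k+2), b, b', h => by
    simp only [Fb]
    exact max_le_max (Nat.mul_le_mul_left _ h)
      (Fb_mono n (k+1) (Nat.mul_le_mul_left _ (Nat.pow_le_pow_left h 2)))

private lemma frac_key (n : ℕ) (hn : 1 ≤ n) {ι : Type*} [DecidableEq ι] :
    ∀ (k : ℕ) (T : Finset ι) (a d : ι → ℕ), T.card = k →
    (∀ i ∈ T, 1 ≤ a i) → (∀ i ∈ T, a i ≤ n) → (∀ i ∈ T, 1 ≤ d i) →
    ∀ (b : ℕ), 1 ≤ b → ∀ (r : ℚ), 0 < r → (∃ z : ℤ, r * (b:ℚ) = (z:ℚ)) →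
    (∑ i ∈ T, (a i : ℚ) / (d i : ℚ)) = r → ∀ i0 ∈ T, a i0 = 1 → d i0 ≤ Fb n k b := by
  intro k
  induction k with
  | zero =>
    intro T a d hcard _ _ _ b _ r _ _ _ i0 hi0 _
    rw [Finset.card_eq_zero] at hcard
    simp [hcard] at hi0
  | succ k ih =>
    intro T a d hcard ha1 han hd1 b hb r hr hint hsum i0 hi0 ha0
    obtain ⟨z, hz⟩ := hint
    have hbQ : (0:ℚ) < (b:ℚ) := by exact_mod_cast hb
    have hzpos : (1:ℚ) ≤ (z:ℚ) := by
      have : (0:ℚ) < (z:ℚ) := hz ▸ mul_pos hr hbQ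
      exact_mod_cast (by exact_mod_cast this : (0:ℤ) < z)
    have hrb1 : (1:ℚ) ≤ r * (b:ℚ) := by rw [hz]; exact hzpos
    have hcardQ : ((T.card : ℚ)) = ((k+1 : ℕ) : ℚ) := by exact_mod_cast hcard
    have hTne : T.Nonempty := Finset.card_pos.mp (by omega)
    have hkQ : (0:ℚ) < ((k+1 : ℕ) : ℚ) := by positivity
    have hdpos : ∀ i ∈ T, (0:ℚ) < (d i : ℚ) := fun i hi => by
      have := hd1 i hi; exact_mod_cast this
    have hbig : ∃ j ∈ T, r / ((k+1 : ℕ) : ℚ) ≤ (a j : ℚ) / (d j : ℚ) := by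
      by_contra hcon
      push_neg at hcon
      have h1 : (∑ i ∈ T, (a i : ℚ) / (d i : ℚ)) < ∑ _i ∈ T, r / ((k+1 : ℕ) : ℚ) :=
        Finset.sum_lt_sum_of_nonempty hTne fun i hi => hcon i hi
      rw [hsum, Finset.sum_const, nsmul_eq_mul, hcardQ] at h1
      have h2 : ((k+1:ℕ):ℚ) * (r / ((k+1:ℕ):ℚ)) = r := by field_simp
      rw [h2] at h1
      exact lt_irrefl _ h1
    have hlow : (1:ℚ) / (((k+1 : ℕ) : ℚ) * (b:ℚ)) ≤ r / ((k+1 : ℕ) : ℚ) := by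
      rw [div_le_div_iff₀ (by positivity) hkQ, one_mul]
      calc ((k+1:ℕ):ℚ) = ((k+1:ℕ):ℚ) * 1 := by ring
        _ ≤ ((k+1:ℕ):ℚ) * (r*(b:ℚ)) := by nlinarith
        _ = r * (((k+1:ℕ):ℚ) * (b:ℚ)) := by ring
    obtain ⟨j, hj, hjbig⟩ := hbig
    by_cases hcase : r / ((k+1:ℕ):ℚ) ≤ (a i0:ℚ)/(d i0:ℚ)
    · have hq : (d i0:ℚ) ≤ ((k+1:ℕ):ℚ) * (b:ℚ) := by
        have h := le_trans hlow hcase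
        rw [ha0] at h
        rw [div_le_div_iff₀ (by positivity) (hdpos i0 hi0)] at h
        push_cast at h ⊢
        linarith
      have hnat : d i0 ≤ (k+1)*b := by exact_mod_cast (by push_cast; push_cast at hq; linarith :
        ((d i0:ℚ)) ≤ (((k+1)*b : ℕ):ℚ))
      cases k with
      | zero => simpa [Fb] using hnat
      | succ k' => exact le_trans hnat (le_max_left _ _)
    · have hne : i0 ≠ j := fun h => hcase (h ▸ hjbig)
      cases k with
      | zero =>
        obtain ⟨x, hx⟩ := Finset.card_eq_one.mp hcard
        rw [hx] at hi0 hj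
        exact absurd (by rw [Finset.mem_singleton.mp hi0, Finset.mem_singleton.mp hj])
          hne
      | succ k' =>
        have hdjQ : (d j:ℚ) ≤ (a j:ℚ) * (((k'+2:ℕ)):ℚ) * (b:ℚ) := by
          have h := le_trans hlow hjbig
          rw [div_le_div_iff₀ (by positivity) (hdpos j hj), one_mul] at h
          calc (d j:ℚ) = 1 * (d j:ℚ) := by ring
            _ ≤ _ := by nlinarith
        have hdjnat : d j ≤ n*(k'+2)*b := by
          have h2 : ((d j:ℚ)) ≤ ((n*(k'+2)*b : ℕ):ℚ) := by
            push_cast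
            have han' : ((a j:ℚ)) ≤ (n:ℚ) := by exact_mod_cast han j hj
            push_cast at hdjQ han'
            nlinarith [hbQ, hdjQ, han',
              mul_le_mul_of_nonneg_right
                (mul_le_mul_of_nonneg_right han' (by positivity : (0:ℚ) ≤ (k':ℚ)+2)) hbQ.le]
          exact_mod_cast h2
        set r' : ℚ := r - (a j:ℚ)/(d j:ℚ) with hr'
        have hsum' : (∑ i ∈ T.erase j, (a i : ℚ) / (d i : ℚ)) = r' := by
          rw [hr', ← hsum, ← Finset.add_sum_erase T _ hj]
          ring
        have hi0' : i0 ∈ T.erase j := Finset.mem_erase.mpr ⟨hne, hi0⟩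
        have hr'pos : 0 < r' := by
          rw [← hsum']
          apply Finset.sum_pos' (fun i hi => by positivity)
          refine ⟨i0, hi0', ?_⟩
          rw [ha0]
          have := hdpos i0 hi0
          positivity
        have hdjne : ((d j):ℚ) ≠ 0 := ne_of_gt (hdpos j hj)
        have hint' : ∃ z' : ℤ, r' * ((b * d j : ℕ):ℚ) = (z':ℚ) := by
          refine ⟨z * (d j : ℤ) - (a j : ℤ) * (b : ℤ), ?_⟩
          have expand : r' * ((b*d j : ℕ):ℚ) = r * (b:ℚ) * (d j:ℚ) - (a j:ℚ) * (b:ℚ) := by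
            rw [hr']
            push_cast
            field_simp
          rw [expand, hz]
          push_cast
          ring
        have hres : d i0 ≤ Fb n (k'+1) (b * d j) :=
          ih (T.erase j) a d (by rw [Finset.card_erase_of_mem hj]; omega)
            (fun i hi => ha1 i (Finset.mem_of_mem_erase hi))
            (fun i hi => han i (Finset.mem_of_mem_erase hi))
            (fun i hi => hd1 i (Finset.mem_of_mem_erase hi))
            (b * d j) (Nat.one_le_iff_ne_zero.mpr
              (Nat.mul_ne_zero (by omega) (by have := hd1 j hj; omega)))
            r' hr'pos hint' hsum' i0 hi0' ha0
        have hmono : Fb n (k'+1) (b * d j) ≤ Fb n (k'+1) (n*(k'+2)*b^2) := by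
          apply Fb_mono
          calc b * d j ≤ b * (n*(k'+2)*b) := Nat.mul_le_mul_left _ hdjnat
            _ = n*(k'+2)*b^2 := by ring
        exact le_trans (le_trans hres hmono) (le_max_right _ _)

private lemma Fb_le (n : ℕ) (hn : 1 ≤ n) : ∀ (k : ℕ) (b : ℕ), 1 ≤ b →
    Fb n (k+1) b ≤ b ^ (2^k) * n ^ (2^k - 1) *
      ∏ i ∈ Finset.range k, (k+1-i) ^ (2^(k-1-i)) := by
  intro k
  induction k with
  | zero => intro b hb; simpa [Fb] using le_refl b
  | succ k ih =>
    intro b hb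
    have hb2 : 0 < n*(k+2)*b^2 := by positivity
    have hone : (1:ℕ) ≤ 2^k := Nat.one_le_two_pow
    have hprod : ∏ i ∈ Finset.range (k+1), (k+2-i) ^ (2^(k-i))
        = (k+2)^(2^k) * ∏ i ∈ Finset.range k, (k+1-i) ^ (2^(k-1-i)) := by
      rw [Finset.prod_range_succ',
        Finset.prod_congr rfl (fun i (hi : i ∈ Finset.range k) => by
          have h1 : k+2-(i+1) = k+1-i := by omega
          have h2 : k-(i+1) = k-1-i := by omega
          rw [h1, h2] :
          ∀ i ∈ Finset.range k, (k+2-(i+1)) ^ (2^(k-(i+1))) = (k+1-i) ^ (2^(k-1-i)))]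
      norm_num [mul_comm]
    have etwo : 2*2^k = 2^(k+1) := by rw [pow_succ, Nat.mul_comm]
    have e1 : (n*(k+2)*b^2) ^ (2^k) = n^(2^k) * (k+2)^(2^k) * b^(2^(k+1)) := by
      rw [mul_pow, mul_pow, ← pow_mul, etwo]
    have e2 : n ^ (2^k) * n ^ (2^k - 1) = n ^ (2^(k+1) - 1) := by
      rw [← pow_add]
      have : 2^(k+1) = 2^k + 2^k := by rw [pow_succ]; omega
      have h1 : (1:ℕ) ≤ 2^k := Nat.one_le_two_pow
      congr 1
      omega
    have key : (n*(k+2)*b^2) ^ (2^k) * n ^ (2^k - 1) *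
          ∏ i ∈ Finset.range k, (k+1-i) ^ (2^(k-1-i))
        = b ^ (2^(k+1)) * n ^ (2^(k+1) - 1) *
          ∏ i ∈ Finset.range (k+1), (k+2-i) ^ (2^(k-i)) := by
      rw [hprod, e1, ← e2]; ring
    have h2 : Fb n (k+1) (n*(k+2)*b^2) ≤ b ^ (2^(k+1)) * n ^ (2^(k+1) - 1) *
          ∏ i ∈ Finset.range (k+1), (k+2-i) ^ (2^(k-i)) := by
      calc Fb n (k+1) (n*(k+2)*b^2)
          ≤ (n*(k+2)*b^2) ^ (2^k) * n ^ (2^k - 1) *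
            ∏ i ∈ Finset.range k, (k+1-i) ^ (2^(k-1-i)) := ih _ hb2
        _ = _ := key
    have h1 : (k+2)*b ≤ b ^ (2^(k+1)) * n ^ (2^(k+1) - 1) *
          ∏ i ∈ Finset.range (k+1), (k+2-i) ^ (2^(k-i)) := by
      have hbb : b ≤ b ^ (2^(k+1)) := Nat.le_self_pow (by positivity) b
      have hnn : 1 ≤ n ^ (2^(k+1) - 1) := Nat.one_le_pow _ _ hn
      have hpp : (k+2) ≤ ∏ i ∈ Finset.range (k+1), (k+2-i) ^ (2^(k-i)) := by
        rw [hprod]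
        calc (k+2) ≤ (k+2)^(2^k) := Nat.le_self_pow (by positivity) _
          _ ≤ (k+2)^(2^k) * ∏ i ∈ Finset.range k, (k+1-i) ^ (2^(k-1-i)) :=
            Nat.le_mul_of_pos_right _ (Finset.prod_pos fun i hi => by
              have h3 : 0 < k+1-i := by have := Finset.mem_range.mp hi; omega
              positivity)
      calc (k+2)*b = b * 1 * (k+2) := by ring
        _ ≤ b ^ (2^(k+1)) * n ^ (2^(k+1) - 1) *
            ∏ i ∈ Finset.range (k+1), (k+2-i) ^ (2^(k-i)) :=
          Nat.mul_le_mul (Nat.mul_le_mul hbb hnn) hpp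
    simp only [Fb]
    exact max_le h1 h2

private lemma ncard_biUnion_eq {α : Type*} [Finite α] {ι : Type*} [DecidableEq ι]
    (T : Finset ι) (f : ι → Set α) (h : (T : Set ι).PairwiseDisjoint f) :
    (⋃ i ∈ T, f i).ncard = ∑ i ∈ T, (f i).ncard := by
  classical
  induction T using Finset.induction_on with
  | empty => simp
  | @insert a T' ha ih =>
    rw [Finset.set_biUnion_insert, Finset.sum_insert ha,
      Set.ncard_union_eq ?_ (Set.toFinite _) (Set.toFinite _),
      ih (h.subset (by simp [Finset.coe_insert, Set.subset_insert]))]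
    rw [Set.disjoint_iUnion_right]
    intro i
    rw [Set.disjoint_iUnion_right]
    intro hi
    exact h (by simp) (by simp [hi]) (fun he => ha (he ▸ hi))

theorem card_subgroup_lt_of_normal_subgroup_noncentral_classes
    {G : Type*} [Group G] [Finite G] (N : Subgroup G) (hN : N.Normal)
    (n s : ℕ) (hn : 1 ≤ n) (hs : 1 ≤ s) (hidx : N.index = n)
    (hcl : {C : Set G | ∃ x : G, x ∈ N ∧ x ∉ Subgroup.center G ∧ C = conjugatesOf x}.ncard = s) :
    Nat.card N <
      n ^ (2 ^ s) * (s + 1) * ∏ i ∈ Finset.range s, (s + 1 - i) ^ 2 ^ (s - 1 - i) := by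
  classical
  letI : Fintype G := Fintype.ofFinite G
  set Z := Subgroup.center G with hZdef
  have hSfin : {C : Set G | ∃ x : G, x ∈ N ∧ x ∉ Z ∧ C = conjugatesOf x}.Finite :=
    Set.toFinite _
  set T : Finset (Set G) := hSfin.toFinset with hTdef
  have hTmem : ∀ C : Set G, C ∈ T ↔ ∃ x : G, x ∈ N ∧ x ∉ Z ∧ C = conjugatesOf x := by
    intro C; rw [hTdef, Set.Finite.mem_toFinset]; rfl
  have hTcard : T.card = s := by
    rw [← hcl, hTdef, Set.ncard_eq_toFinset_card _ hSfin]
  have hrep : ∀ C ∈ T, ∃ x : G, x ∈ N ∧ x ∉ Z ∧ C = conjugatesOf x :=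
    fun C hC => (hTmem C).mp hC
  choose! x hx1 hx2 hx3 using hrep
  set m := Nat.card N with hmdef
  have hmpos : 0 < m := Nat.card_pos
  have hG : Nat.card G = n * m := by rw [← hidx, ← Subgroup.index_mul_card (H := N)]
  set z := Nat.card (N ⊓ Z : Subgroup G) with hzdef
  have hzpos : 0 < z := Nat.card_pos
  have hzdvd : z ∣ m := Subgroup.card_dvd_of_le inf_le_left
  -- each class is inside N and outside the center
  have hclassN : ∀ C ∈ T, C ⊆ (N : Set G) := by
    intro C hC y hy
    rw [hx3 C hC] at hy
    obtain ⟨g, hg⟩ := isConj_iff.mp hy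
    exact hg ▸ hN.conj_mem _ (hx1 C hC) g
  have hclassZ : ∀ C ∈ T, ∀ y ∈ C, y ∉ (Z : Set G) := by
    intro C hC y hy hyZ
    rw [hx3 C hC] at hy
    obtain ⟨g, hg⟩ := isConj_iff.mp hy
    apply hx2 C hC
    have hyZ' : y ∈ Z := hyZ
    have hy' := (Subgroup.mem_center_iff.mp hyZ') g⁻¹
    have hxy : x C = g⁻¹ * y * g := by rw [← hg]; group
    have hcj : g⁻¹ * y * g = y := by rw [hy']; group
    rw [hxy, hcj]; exact hyZ'
  -- orbit-stabilizer
  have hos : ∀ C ∈ T, C.ncard * Nat.card (Subgroup.centralizer {x C}) = n * m := by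
    intro C hC
    have hCeq : C = MulAction.orbit (ConjAct G) (x C) := by
      conv_lhs => rw [hx3 C hC]
      ext y
      simp only [conjugatesOf, Set.mem_setOf_eq, ConjAct.mem_orbit_conjAct]
      exact isConj_comm
    have hcent : Nat.card (Subgroup.centralizer {x C})
        = Nat.card (MulAction.stabilizer (ConjAct G) (x C)) := by
      refine Nat.card_congr (Equiv.subtypeEquiv ConjAct.toConjAct.toEquiv (fun g => ?_))
      rw [Subgroup.mem_centralizer_iff, MulAction.mem_stabilizer_iff]
      change _ ↔ ConjAct.toConjAct g • x C = x C
      rw [ConjAct.toConjAct_smul, mul_inv_eq_iff_eq_mul]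
      simp only [Set.mem_singleton_iff, forall_eq]
      exact eq_comm
    have horb : C.ncard = Nat.card (MulAction.orbit (ConjAct G) (x C)) := by
      conv_lhs => rw [hCeq]
      exact (Nat.card_coe_set_eq _).symm
    rw [horb, hcent, Nat.card_eq_fintype_card, Nat.card_eq_fintype_card,
      MulAction.card_orbit_mul_card_stabilizer_eq_card_group (ConjAct G) (x C), ← hG,
      ← Nat.card_eq_fintype_card]
    exact Nat.card_congr ConjAct.ofConjAct.toEquiv
  -- centralizer lower bounds
  have hcent_pos : ∀ C ∈ T, 0 < Nat.card (Subgroup.centralizer {x C}) := fun C hC => Nat.card_pos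
  have hcent_dvd : ∀ C ∈ T, z ∣ Nat.card (Subgroup.centralizer {x C}) := by
    intro C hC
    exact Subgroup.card_dvd_of_le (le_trans inf_le_right (Subgroup.center_le_centralizer _))
  have hcent_ge : ∀ C ∈ T, 2 * z ≤ Nat.card (Subgroup.centralizer {x C}) := by
    intro C hC
    have hle : N ⊓ Z ≤ (Subgroup.centralizer {x C}) := le_trans inf_le_right (Subgroup.center_le_centralizer _)
    have hxmem : x C ∈ (Subgroup.centralizer {x C}) := by
      rw [Subgroup.mem_centralizer_iff]
      intro y hy
      rw [Set.mem_singleton_iff] at hy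
      rw [hy]
    have hne : z ≠ Nat.card (Subgroup.centralizer {x C}) := by
      intro heq
      have hsub : ((N ⊓ Z : Subgroup G) : Set G) ⊆ ((Subgroup.centralizer {x C}) : Set G) := hle
      have heq2 : ((N ⊓ Z : Subgroup G) : Set G) = ((Subgroup.centralizer {x C}) : Set G) := by
        apply Set.eq_of_subset_of_ncard_le hsub _ (Set.toFinite _)
        rw [← Nat.card_coe_set_eq, ← Nat.card_coe_set_eq]
        exact le_of_eq heq.symm
      have : x C ∈ (N ⊓ Z : Subgroup G) := by rw [← SetLike.mem_coe, heq2]; exact hxmem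
      exact hx2 C hC this.2
    obtain ⟨q, hq⟩ := hcent_dvd C hC
    have hcpos : 0 < Nat.card (Subgroup.centralizer {x C}) := hcent_pos C hC
    have hq2 : q ≠ 0 := by rintro rfl; omega
    have hq1 : q ≠ 1 := by rintro rfl; rw [Nat.mul_one] at hq; exact hne hq.symm
    calc 2*z = z*2 := by ring
      _ ≤ z*q := Nat.mul_le_mul_left z (by omega)
      _ = Nat.card (Subgroup.centralizer {x C}) := hq.symm
  -- partition of N
  have hpart : (N : Set G) = ((N : Set G) ∩ (Z : Set G)) ∪ ⋃ C ∈ T, C := by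
    ext y
    constructor
    · intro hy
      by_cases hyZ : y ∈ (Z : Set G)
      · exact Or.inl ⟨hy, hyZ⟩
      · refine Or.inr ?_
        rw [Set.mem_iUnion₂]
        refine ⟨conjugatesOf y, (hTmem _).mpr ⟨y, hy, hyZ, rfl⟩, mem_conjugatesOf_self⟩
    · intro hy
      rcases hy with hy | hy
      · exact hy.1
      · rw [Set.mem_iUnion₂] at hy
        obtain ⟨C, hC, hyC⟩ := hy
        exact hclassN C hC hyC
  have hpdisj : ((T : Set (Set G)).PairwiseDisjoint (fun C => C)) := by
    intro C hC D hD hCD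
    rw [Finset.mem_coe] at hC hD
    rw [Function.onFun, Set.disjoint_left]
    intro y hyC hyD
    apply hCD
    have h1 : IsConj (x C) y := by
      have := hx3 C hC ▸ hyC; exact this
    have h2 : IsConj (x D) y := by
      have := hx3 D hD ▸ hyD; exact this
    rw [hx3 C hC, hx3 D hD]
    exact IsConj.conjugatesOf_eq (h1.trans h2.symm)
  have hcount : m = z + ∑ C ∈ T, C.ncard := by
    have h1 : (N : Set G).ncard = ((N : Set G) ∩ (Z : Set G)).ncard + (⋃ C ∈ T, C).ncard := by
      rw [← Set.ncard_union_eq ?_ (Set.toFinite _) (Set.toFinite _), ← hpart]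
      · rw [Set.disjoint_left]
        intro y hy hy2
        rw [Set.mem_iUnion₂] at hy2
        obtain ⟨C, hC, hyC⟩ := hy2
        exact hclassZ C hC y hyC hy.2
    have h2 : (⋃ C ∈ T, C).ncard = ∑ C ∈ T, C.ncard := ncard_biUnion_eq T _ hpdisj
    have h3 : ((N : Set G) ∩ (Z : Set G)).ncard = z := by
      rw [hzdef, ← Subgroup.coe_inf, ← Nat.card_coe_set_eq]
      rfl
    have h4 : (N : Set G).ncard = m := by
      rw [hmdef, ← Nat.card_coe_set_eq]
      rfl
    rw [← h4, h1, h2, h3]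
  -- the integer t = m / z
  set t := m / z with htdef
  have hmt : m = z * t := (Nat.mul_div_cancel' hzdvd).symm
  have hzltm : z < m := by
    have hTne : T.Nonempty := Finset.card_pos.mp (by omega)
    obtain ⟨C, hC⟩ := hTne
    have hss : ((N : Set G) ∩ (Z : Set G)) ⊂ (N : Set G) := by
      constructor
      · exact Set.inter_subset_left
      · intro hsub
        exact hx2 C hC (hsub (hx1 C hC)).2
    have hlt := Set.ncard_lt_ncard hss (Set.toFinite _)
    have h3 : ((N : Set G) ∩ (Z : Set G)).ncard = z := by
      rw [hzdef, ← Subgroup.coe_inf, ← Nat.card_coe_set_eq]; rfl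
    have h4 : (N : Set G).ncard = m := by
      rw [hmdef, ← Nat.card_coe_set_eq]; rfl
    omega
  have ht2 : 2 ≤ t := by
    by_contra h
    push_neg at h
    interval_cases t
    · simp at hmt; omega
    · rw [Nat.mul_one] at hmt; omega
  have htposQ : (0:ℚ) < (t:ℚ) := by exact_mod_cast (by omega : 0 < t)
  have hmposQ : (0:ℚ) < (m:ℚ) := by exact_mod_cast hmpos
  -- the rational class equation
  have hclassQ : ∀ C ∈ T,
      (n:ℚ)/((Nat.card (Subgroup.centralizer {x C}) : ℕ):ℚ) = ((C.ncard : ℕ):ℚ)/(m:ℚ) := by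
    intro C hC
    rw [div_eq_div_iff (by exact_mod_cast Nat.pos_iff_ne_zero.mp (hcent_pos C hC) : ((Nat.card (Subgroup.centralizer {x C}) : ℕ):ℚ) ≠ 0) (ne_of_gt hmposQ)]
    exact_mod_cast (hos C hC).symm
  have hsumQ : (1:ℚ)/(t:ℚ) +
      ∑ C ∈ T, (n:ℚ)/((Nat.card (Subgroup.centralizer {x C}) : ℕ):ℚ) = 1 := by
    rw [Finset.sum_congr rfl hclassQ, ← Finset.sum_div]
    have h1t : (1:ℚ)/(t:ℚ) = (z:ℚ)/(m:ℚ) := by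
      rw [div_eq_div_iff (ne_of_gt htposQ) (ne_of_gt hmposQ), one_mul]
      exact_mod_cast hmt
    rw [h1t, ← add_div]
    have hnum : (z:ℚ) + ∑ C ∈ T, ((C.ncard : ℕ):ℚ) = (m:ℚ) := by
      rw [hcount]; push_cast; ring
    rw [hnum]
    exact div_self (ne_of_gt hmposQ)
  -- apply the key fraction lemma
  set a : Option (Set G) → ℕ := fun o => o.elim 1 (fun _ => n) with ha
  set d : Option (Set G) → ℕ :=
    fun o => o.elim t (fun C => Nat.card (Subgroup.centralizer {x C})) with hd
  set T' : Finset (Option (Set G)) := insert none (T.image some) with hT'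
  have hnone : (none : Option (Set G)) ∉ T.image some := by simp
  have hT'card : T'.card = s + 1 := by
    rw [hT', Finset.card_insert_of_notMem hnone,
      Finset.card_image_of_injective _ (Option.some_injective _), hTcard]
  have hmemT' : ∀ i ∈ T', i = none ∨ ∃ C ∈ T, i = some C := by
    intro i hi
    rcases Finset.mem_insert.mp hi with h | h
    · exact Or.inl h
    · obtain ⟨C, hC, rfl⟩ := Finset.mem_image.mp h
      exact Or.inr ⟨C, hC, rfl⟩
  have hsum' : ∑ i ∈ T', (a i : ℚ)/(d i : ℚ) = 1 := by
    rw [hT', Finset.sum_insert hnone,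
      Finset.sum_image (fun _ _ _ _ h => Option.some_injective _ h)]
    simp only [ha, hd, Option.elim_none, Option.elim_some, Nat.cast_one]
    exact hsumQ
  have hkey : t ≤ Fb n (s+1) 1 := by
    have h := frac_key n hn (s+1) T' a d hT'card ?_ ?_ ?_ 1 le_rfl 1 one_pos
      ⟨1, by norm_num⟩ hsum' none (Finset.mem_insert_self _ _) rfl
    · exact h
    · intro i hi
      rcases hmemT' i hi with rfl | ⟨C, hC, rfl⟩
      · simp [ha]
      · simpa [ha] using hn
    · intro i hi
      rcases hmemT' i hi with rfl | ⟨C, hC, rfl⟩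
      · simpa [ha] using hn
      · simp [ha]
    · intro i hi
      rcases hmemT' i hi with rfl | ⟨C, hC, rfl⟩
      · simp only [hd, Option.elim_none]; omega
      · simpa [hd, Nat.one_le_iff_ne_zero, Nat.pos_iff_ne_zero] using hcent_pos C hC
  -- the counting inequality
  have hsum_le : 2*z*(m - z) ≤ s*(n*m) := by
    have hterm : ∀ C ∈ T, 2*z*C.ncard ≤ n*m := by
      intro C hC
      calc 2*z*C.ncard ≤ (Nat.card (Subgroup.centralizer {x C}))*C.ncard :=
            Nat.mul_le_mul_right _ (hcent_ge C hC)
        _ = n*m := by rw [mul_comm]; exact hos C hC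
    calc 2*z*(m-z) = ∑ C ∈ T, 2*z*C.ncard := by
          rw [← Finset.mul_sum]
          congr 1
          omega
      _ ≤ ∑ C ∈ T, n*m := Finset.sum_le_sum hterm
      _ = s*(n*m) := by rw [Finset.sum_const, hTcard, smul_eq_mul]
  have hmsnt : m ≤ s*n*t := by
    have key : (m:ℤ) ≤ (s:ℤ)*(n:ℤ)*(t:ℤ) := by
      have h1 : 2*(z:ℤ)*((m:ℤ)-(z:ℤ)) ≤ (s:ℤ)*((n:ℤ)*(m:ℤ)) := by
        have h0 := hsum_le
        zify [hzltm.le] at h0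
        exact h0
      have hmtZ : (m:ℤ) = (z:ℤ)*(t:ℤ) := by exact_mod_cast hmt
      have hzZ : (1:ℤ) ≤ (z:ℤ) := by exact_mod_cast hzpos
      have htZ : (2:ℤ) ≤ (t:ℤ) := by exact_mod_cast ht2
      have hnZ : (1:ℤ) ≤ (n:ℤ) := by exact_mod_cast hn
      have hsZ : (1:ℤ) ≤ (s:ℤ) := by exact_mod_cast hs
      rw [hmtZ] at h1
      have e0 : (z:ℤ)*(2*(z:ℤ)*((t:ℤ)-1)) ≤ (z:ℤ)*((s:ℤ)*(n:ℤ)*(t:ℤ)) := by nlinarith [h1]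
      have e1 : 2*(z:ℤ)*((t:ℤ)-1) ≤ (s:ℤ)*(n:ℤ)*(t:ℤ) :=
        le_of_mul_le_mul_left e0 (by linarith)
      have e3 : (z:ℤ)*(t:ℤ)*(2*((t:ℤ)-1)) ≤ (s:ℤ)*(n:ℤ)*(t:ℤ)*(2*((t:ℤ)-1)) := by
        calc (z:ℤ)*(t:ℤ)*(2*((t:ℤ)-1)) = (t:ℤ)*(2*(z:ℤ)*((t:ℤ)-1)) := by ring
          _ ≤ (t:ℤ)*((s:ℤ)*(n:ℤ)*(t:ℤ)) := mul_le_mul_of_nonneg_left e1 (by linarith)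
          _ = (s:ℤ)*(n:ℤ)*(t:ℤ)*(t:ℤ) := by ring
          _ ≤ (s:ℤ)*(n:ℤ)*(t:ℤ)*(2*((t:ℤ)-1)) :=
            mul_le_mul_of_nonneg_left (by linarith)
              (mul_nonneg (mul_nonneg (by linarith) (by linarith)) (by linarith))
      have := le_of_mul_le_mul_right e3 (by linarith : (0:ℤ) < 2*((t:ℤ)-1))
      linarith [hmtZ ▸ this]
    exact_mod_cast key
  -- final numeric bound
  have hFb := Fb_le n hn s 1 le_rfl
  have hPpos : 0 < ∏ i ∈ Finset.range s, (s + 1 - i) ^ 2 ^ (s - 1 - i) :=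
    Finset.prod_pos fun i hi => by
      have := Finset.mem_range.mp hi
      have h0 : 0 < s + 1 - i := by omega
      positivity
  have hFb' : Fb n (s+1) 1 ≤ n^(2^s - 1) * ∏ i ∈ Finset.range s, (s + 1 - i) ^ 2 ^ (s - 1 - i) := by
    simpa using hFb
  have hnn : n * n^(2^s - 1) = n^(2^s) := by
    rw [← pow_succ']
    congr 1
    have := Nat.one_le_two_pow (n := s)
    omega
  have hfinal : m ≤ s*(n^(2^s) * ∏ i ∈ Finset.range s, (s + 1 - i) ^ 2 ^ (s - 1 - i)) := by
    calc m ≤ s*n*t := hmsnt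
      _ ≤ s*n*(Fb n (s+1) 1) := Nat.mul_le_mul_left _ hkey
      _ ≤ s*n*(n^(2^s - 1) * ∏ i ∈ Finset.range s, (s + 1 - i) ^ 2 ^ (s - 1 - i)) :=
          Nat.mul_le_mul_left _ hFb'
      _ = s*((n * n^(2^s - 1)) * ∏ i ∈ Finset.range s, (s + 1 - i) ^ 2 ^ (s - 1 - i)) := by ring
      _ = _ := by rw [hnn]
  calc m ≤ s*(n^(2^s) * ∏ i ∈ Finset.range s, (s + 1 - i) ^ 2 ^ (s - 1 - i)) := hfinal
    _ < (s+1)*(n^(2^s) * ∏ i ∈ Finset.range s, (s + 1 - i) ^ 2 ^ (s - 1 - i)) := by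
        have hQpos : 0 < n^(2^s) * ∏ i ∈ Finset.range s, (s + 1 - i) ^ 2 ^ (s - 1 - i) :=
          Nat.mul_pos (pow_pos hn (2^s)) hPpos
        exact (Nat.mul_lt_mul_right hQpos).mpr (Nat.lt_succ_self s)
    _ = n ^ (2 ^ s) * (s + 1) * ∏ i ∈ Finset.range s, (s + 1 - i) ^ 2 ^ (s - 1 - i) := by ring
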